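/- arXiv:2206.06591 — 2 statements merged into one kernel-verified Lean document; each statement's English description precedes it below -/
import Mathlib

section
/- For integers N ≥ 1, l ≥ 1, and indeterminates x, y, the polynomial e(x,y) := ∏_{r=0}^{N} (r·x + (N−r)·y) satisfies e(x,y) = N·x · ∑_{i=0}^{N} a_i^{(l)} · (l·x − (l−1)·y)^i · (y−x)^{N−i}, where a_i^{(l)} is the coefficient of ε^i in the polynomial ∏_{r=1}^{N} (N(l−1) + r + N·ε). -/
open Polynomial Finset in
/-- Homogenization lemma: if `Q = ∏ (C (c r) + C n * X)` then
`∏ (c r • v + n • u) = ∑ Q.coeff i • u^i v^(m-i)`. -/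
lemma key_homog {R : Type*} [CommRing R] [Algebra ℚ R] (u v : R) (n : ℚ) (c : ℕ → ℚ) :
    ∀ m : ℕ, ∏ r ∈ range m, (c r • v + n • u)
      = ∑ i ∈ range (m + 1),
          ((∏ r ∈ range m, (C (c r) + C n * X)).coeff i) • (u ^ i * v ^ (m - i)) := by
  intro m
  induction m with
  | zero => simp
  | succ m ih =>
    set Q : ℚ[X] := ∏ r ∈ range m, (C (c r) + C n * X) with hQ
    have hdeg : Q.natDegree ≤ m := by
      refine le_trans (Polynomial.natDegree_prod_le _ _) ?_
      calc ∑ r ∈ range m, (C (c r) + C n * X).natDegree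
          ≤ ∑ _r ∈ range m, 1 := by
            refine Finset.sum_le_sum fun r _ => ?_
            refine le_trans (natDegree_add_le _ _) ?_
            simp only [natDegree_C, max_le_iff]
            exact ⟨Nat.zero_le _, le_trans (natDegree_C_mul_le _ _) (by simp)⟩
        _ = m := by simp
    have hcoeff_top : Q.coeff (m + 1) = 0 :=
      coeff_eq_zero_of_natDegree_lt (lt_of_le_of_lt hdeg (Nat.lt_succ_self m))
    rw [prod_range_succ, ih, prod_range_succ]
    have hsplit : ∀ i : ℕ,
        ((Q * (C (c m) + C n * X)).coeff i) • (u ^ i * v ^ (m + 1 - i))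
        = (c m * Q.coeff i) • (u ^ i * v ^ (m + 1 - i))
          + (n * (Q * X).coeff i) • (u ^ i * v ^ (m + 1 - i)) := by
      intro i
      rw [← add_smul]
      congr 1
      have : Q * (C (c m) + C n * X) = C (c m) * Q + C n * (Q * X) := by ring
      rw [this, coeff_add, coeff_C_mul, coeff_C_mul]
    rw [← hQ]
    simp only [hsplit, Finset.sum_add_distrib]
    have h1 : ∑ i ∈ range (m + 1 + 1), (c m * Q.coeff i) • (u ^ i * v ^ (m + 1 - i))
        = (∑ i ∈ range (m + 1), Q.coeff i • (u ^ i * v ^ (m - i))) * (c m • v) := by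
      rw [Finset.sum_range_succ, hcoeff_top, mul_zero, zero_smul, add_zero,
        Finset.sum_mul]
      refine Finset.sum_congr rfl fun i hi => ?_
      have hi' : i ≤ m := Nat.lt_succ_iff.mp (Finset.mem_range.mp hi)
      rw [smul_mul_smul_comm, Nat.succ_sub hi', pow_succ]
      rw [mul_comm (c m) (Q.coeff i)]
      ring_nf
    have h2 : ∑ i ∈ range (m + 1 + 1), (n * (Q * X).coeff i) • (u ^ i * v ^ (m + 1 - i))
        = (∑ i ∈ range (m + 1), Q.coeff i • (u ^ i * v ^ (m - i))) * (n • u) := by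
      rw [Finset.sum_range_succ', Finset.sum_mul]
      have h0 : (Q * X).coeff 0 = 0 := by
        simp [coeff_mul_X_zero]
      rw [h0, mul_zero, zero_smul, add_zero]
      refine Finset.sum_congr rfl fun i hi => ?_
      rw [coeff_mul_X, smul_mul_smul_comm, Nat.succ_sub_succ, pow_succ]
      rw [mul_comm n (Q.coeff i)]
      ring_nf
    rw [h1, h2, ← mul_add]

/-- For integers `N ≥ 1`, `l ≥ 1`, the polynomial
`e(x,y) = ∏_{r=0}^{N} (r x + (N−r) y)` satisfies
`e(x,y) = N x ∑_{i=0}^{N} a_i^{(l)} (l x − (l−1) y)^i (y−x)^{N−i}`,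
where `a_i^{(l)}` is the coefficient of `ε^i` in `∏_{r=1}^{N} (N(l−1)+r+Nε)`.
Stated for indeterminates `x, y` in an arbitrary commutative ℚ-algebra. -/
theorem stmt0 (N l : ℕ) (hN : 1 ≤ N) (hl : 1 ≤ l)
    (a : ℕ → ℚ)
    (ha : ∀ i, a i = (∏ r ∈ Finset.range N,
        (Polynomial.C ((N * (l - 1) + (r + 1) : ℕ) : ℚ) + (N : ℚ) • Polynomial.X)).coeff i)
    (R : Type*) [CommRing R] [Algebra ℚ R] (x y : R) :
    ∏ r ∈ Finset.range (N + 1), ((r : ℚ) • x + ((N - r : ℕ) : ℚ) • y)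
      = (N : ℚ) • x * ∑ i ∈ Finset.range (N + 1),
          (a i) • (((l : ℚ) • x - ((l - 1 : ℕ) : ℚ) • y) ^ i * (y - x) ^ (N - i)) := by
  have hl1 : ((l - 1 : ℕ) : ℚ) = (l : ℚ) - 1 := by
    push_cast [Nat.cast_sub hl]; ring
  set u : R := (l : ℚ) • x - ((l - 1 : ℕ) : ℚ) • y with hu
  set v : R := y - x with hv
  have hprod : ∏ r ∈ Finset.range N, ((r : ℚ) • x + ((N - r : ℕ) : ℚ) • y)
      = ∏ r ∈ Finset.range N,
          (((N * (l - 1) + (r + 1) : ℕ) : ℚ) • v + (N : ℚ) • u) := by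
    rw [← Finset.prod_range_reflect]
    refine Finset.prod_congr rfl fun r hr => ?_
    have hr' : r + 1 ≤ N := Finset.mem_range.mp hr
    have h1 : ((N - 1 - r : ℕ) : ℚ) = (N : ℚ) - 1 - r := by
      rw [Nat.sub_sub]
      rw [Nat.cast_sub (by omega : 1 + r ≤ N)]
      push_cast; ring
    have h2 : ((N - (N - 1 - r) : ℕ) : ℚ) = (r : ℚ) + 1 := by
      have : N - (N - 1 - r) = r + 1 := by omega
      rw [this]; push_cast; ring
    have h3 : ((N * (l - 1) + (r + 1) : ℕ) : ℚ) = (N : ℚ) * ((l : ℚ) - 1) + r + 1 := by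
      rw [Nat.cast_add, Nat.cast_mul, Nat.cast_sub hl]
      push_cast; ring
    rw [h1, h2, h3, hu, hv, hl1]
    module
  rw [Finset.prod_range_succ, hprod,
    key_homog u v (N : ℚ) (fun r => ((N * (l - 1) + (r + 1) : ℕ) : ℚ)) N]
  have hsimp : ((N - N : ℕ) : ℚ) = 0 := by simp
  rw [hsimp, zero_smul, add_zero, mul_comm]
  congr 1
  refine Finset.sum_congr rfl fun i _ => ?_
  rw [ha i]
  congr 2
  refine Finset.prod_congr rfl fun r _ => ?_
  rw [Polynomial.smul_eq_C_mul]
end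

section
/- Let N ≥ 2, d ≥ 1, α ≥ 0 be integers and z_d a nonzero complex variable. Then the residue at z_{d−1} = ((d−1)/d)·z_d of the function z_{d−1} ↦ [(z_d − z_{d−1})^α / (z_{d−1} − ((d−1)/d) z_d)^{α+1}] · e(z_{d−1}, z_d)/(N z_{d−1}) equals (z_d)^N · d^α · ∑_{l=0}^{α} A_l^{(d)} · (−d)^{−α+l}, where e(x,y) = ∏_{r=0}^{N}(r x + (N−r) y) and A_l^{(d)} = ∑_{i=0}^{l} a_i^{(d)} C(N+l−i−1, l−i) (−1)^{l−i} d^{−(N+l−i)}, with a_i^{(d)} the coefficient of ε^i in ∏_{r=1}^{N}(N(d−1)+r+Nε). -/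
open Polynomial Finset

private lemma poly_iteratedDeriv' (p : Polynomial ℂ) (n : ℕ) :
    iteratedDeriv n (fun z : ℂ => p.eval z) = fun x => (Polynomial.derivative^[n] p).eval x := by
  induction n with
  | zero => simp
  | succ n ih =>
    rw [iteratedDeriv_succ, ih]
    funext x
    rw [Function.iterate_succ_apply']
    exact Polynomial.deriv _

private lemma coeff_one_sub_pow' (m n : ℕ) :
    ((1 - X : Polynomial ℂ) ^ m).coeff n = (-1 : ℂ) ^ n * m.choose n := by
  have h1 : (1 - X : Polynomial ℂ) ^ m
      = ∑ k ∈ range (m + 1), C ((-1 : ℂ) ^ k * m.choose k) * X ^ k := by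
    have : (1 - X : Polynomial ℂ) = (-X) + 1 := by ring
    rw [this, add_pow]
    refine Finset.sum_congr rfl fun k hk => ?_
    rw [neg_pow]
    simp only [map_mul, map_pow, map_neg, map_one, Polynomial.C_eq_natCast]
    ring
  rw [h1, finset_sum_coeff]
  rw [Finset.sum_congr rfl (fun k _ => coeff_C_mul_X_pow _ _ _),
    Finset.sum_ite_eq (range (m+1)) n (fun k => (-1:ℂ)^k * (m.choose k : ℂ))]
  by_cases h : n ∈ range (m+1)
  · simp [h]
  · have : m.choose n = 0 := Nat.choose_eq_zero_of_lt (by simpa using h)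
    simp [h, this]

private lemma ps_coeff_one_sub_pow' (m n : ℕ) :
    (PowerSeries.coeff n) ((1 - PowerSeries.X) ^ m) = (-1 : ℂ) ^ n * m.choose n := by
  have : ((1 - PowerSeries.X : PowerSeries ℂ)) = ((1 - X : Polynomial ℂ) : PowerSeries ℂ) := by
    push_cast
    rfl
  rw [this, ← Polynomial.coe_pow, Polynomial.coeff_coe, coeff_one_sub_pow']

private lemma key_binom' (k K n : ℕ) (hk : k ≤ K) :
    ∑ i ∈ range (n + 1), (-1 : ℂ) ^ i * k.choose i * ((K + n - i).choose (n - i))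
      = ((K - k + n).choose n : ℂ) := by
  have hmain : ((1 - PowerSeries.X : PowerSeries ℂ) ^ k) * (PowerSeries.invOneSubPow ℂ (K + 1)).val
      = (PowerSeries.invOneSubPow ℂ (K - k + 1)).val := by
    have hc : ((1 - PowerSeries.X : PowerSeries ℂ) ^ k * (PowerSeries.invOneSubPow ℂ (K + 1)).val)
        * ((1 - PowerSeries.X) ^ (K - k + 1)) = 1 := by
      rw [mul_comm ((1 - PowerSeries.X : PowerSeries ℂ) ^ k), mul_assoc, ← pow_add]
      have : k + (K - k + 1) = K + 1 := by omega
      rw [this, ← PowerSeries.invOneSubPow_inv_eq_one_sub_pow]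
      exact (PowerSeries.invOneSubPow ℂ (K + 1)).val_inv
    have hc2 : ((PowerSeries.invOneSubPow ℂ (K - k + 1)).val)
        * ((1 - PowerSeries.X : PowerSeries ℂ) ^ (K - k + 1)) = 1 := by
      rw [← PowerSeries.invOneSubPow_inv_eq_one_sub_pow]
      exact (PowerSeries.invOneSubPow ℂ (K - k + 1)).val_inv
    calc (1 - PowerSeries.X : PowerSeries ℂ) ^ k * (PowerSeries.invOneSubPow ℂ (K + 1)).val
        = ((1 - PowerSeries.X : PowerSeries ℂ) ^ k * (PowerSeries.invOneSubPow ℂ (K + 1)).val)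
          * (((1 - PowerSeries.X : PowerSeries ℂ) ^ (K - k + 1))
            * (PowerSeries.invOneSubPow ℂ (K - k + 1)).val) := by
          rw [mul_comm ((1 - PowerSeries.X : PowerSeries ℂ) ^ (K - k + 1)), hc2, mul_one]
      _ = (PowerSeries.invOneSubPow ℂ (K - k + 1)).val := by
          rw [← mul_assoc, hc, one_mul]
  have := congrArg (PowerSeries.coeff n) hmain
  rw [PowerSeries.coeff_mul, Finset.Nat.sum_antidiagonal_eq_sum_range_succ_mk,
    PowerSeries.invOneSubPow_val_succ_eq_mk_add_choose,
    PowerSeries.invOneSubPow_val_succ_eq_mk_add_choose] at this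
  simp only [PowerSeries.coeff_mk] at this
  have h0 : ((K - k + n).choose n : ℂ) = ((K - k + n).choose (K - k) : ℂ) := by
    norm_cast
    rw [← Nat.choose_symm (Nat.le_add_right _ _)]
    congr 1
    omega
  rw [h0, ← this]
  refine Finset.sum_congr rfl fun i hi => ?_
  rw [ps_coeff_one_sub_pow']
  have h1 : K + n - i = K + (n - i) := by
    have : i ≤ n := by simpa using Nat.lt_succ_iff.mp (Finset.mem_range.mp hi)
    omega
  rw [h1]
  have h2 : (K + (n - i)).choose (n - i) = (K + (n - i)).choose K := by
    rw [← Nat.choose_symm (Nat.le_add_right _ _)]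
    congr 1
    omega
  rw [h2]

private lemma hockey' (N M : ℕ) (hN : 1 ≤ N) :
    ∑ m ∈ range (M + 1), (N - 1 + m).choose m = (N + M).choose M := by
  have h1 : ∀ m, (N - 1 + m).choose m = (N - 1 + m).choose (N - 1) := by
    intro m
    have h := Nat.choose_symm (Nat.le_add_right (N - 1) m)
    rwa [show N - 1 + m - (N - 1) = m by omega] at h
  simp only [h1]
  have h2 : ∑ m ∈ range (M + 1), (N - 1 + m).choose (N - 1)
      = ∑ t ∈ Icc (N - 1) (N - 1 + M), t.choose (N - 1) := by
    rw [← Finset.Ico_add_one_right_eq_Icc, Finset.sum_Ico_eq_sum_range,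
      show N - 1 + M + 1 - (N - 1) = M + 1 by omega]
  rw [h2, Nat.sum_Icc_choose]
  have : N - 1 + M + 1 = N + M := by omega
  rw [this, show N - 1 + 1 = N by omega]
  rw [← Nat.choose_symm (Nat.le_add_right _ _)]
  congr 1
  omega

private lemma coeff_comp_C_mul_X' (p : Polynomial ℂ) (b : ℂ) (n : ℕ) :
    (p.comp (C b * X)).coeff n = p.coeff n * b ^ n := by
  induction p using Polynomial.induction_on' with
  | add p q hp hq => simp [add_comp, hp, hq, add_mul]
  | monomial k a =>
    rw [Polynomial.monomial_comp, mul_pow, ← C_pow, ← mul_assoc, ← C_mul,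
      coeff_C_mul_X_pow, coeff_monomial]
    by_cases h : n = k
    · subst h; simp
    · simp [h, Ne.symm h]

private lemma sum_triangle' (n : ℕ) (f : ℕ → ℕ → ℂ) :
    ∑ k ∈ range (n + 1), ∑ i ∈ range (k + 1), f i k
      = ∑ i ∈ range (n + 1), ∑ m ∈ range (n + 1 - i), f i (i + m) := by
  have h1 : ∀ k ∈ range (n + 1), ∑ i ∈ range (k + 1), f i k
      = ∑ i ∈ range (n + 1), if i ≤ k then f i k else 0 := by
    intro k hk
    rw [Finset.sum_ite, Finset.sum_const_zero, add_zero]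
    apply Finset.sum_congr
    · ext i
      simp only [mem_filter, mem_range] at *
      omega
    · intros; rfl
  rw [Finset.sum_congr rfl h1, Finset.sum_comm]
  refine Finset.sum_congr rfl fun i hi => ?_
  rw [Finset.sum_ite, Finset.sum_const_zero, add_zero]
  have h2 : filter (fun k => i ≤ k) (range (n + 1)) = Ico i (n + 1) := by
    ext k
    simp only [mem_filter, mem_range, mem_Ico]
    omega
  rw [h2, Finset.sum_Ico_eq_sum_range, show n + 1 - i = n + 1 - i from rfl]

private lemma coeff_comp_one_sub' (g : Polynomial ℂ) (B n : ℕ) (hdeg : g.natDegree < B) :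
    (g.comp (1 - X)).coeff n = ∑ m ∈ range B, g.coeff m * ((-1 : ℂ) ^ n * m.choose n) := by
  rw [comp_eq_sum_left,
    Polynomial.sum_over_range' g (fun e => by simp) B hdeg, finset_sum_coeff]
  exact Finset.sum_congr rfl fun m _ => by rw [coeff_C_mul, coeff_one_sub_pow']

private lemma coeff_prod_linear' (s : Finset ℕ) (u v : ℕ → ℂ) (j : ℕ) :
    (∏ r ∈ s, (C (u r) + C (v r) * X)).coeff j
      = ∑ t ∈ s.powerset, if t.card = j then (∏ r ∈ t, v r) * ∏ r ∈ s \ t, u r else 0 := by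
  have h0 : ∀ r : ℕ, C (u r) + C (v r) * X = (fun r => C (v r) * X) r + (fun r => C (u r)) r :=
    fun r => add_comm _ _
  rw [Finset.prod_congr rfl (fun r _ => h0 r), Finset.prod_add, finset_sum_coeff]
  refine Finset.sum_congr rfl fun t ht => ?_
  have h1 : (∏ r ∈ t, C (v r) * X) * ∏ r ∈ s \ t, C (u r)
      = C ((∏ r ∈ t, v r) * ∏ r ∈ s \ t, u r) * X ^ t.card := by
    rw [Finset.prod_mul_distrib, Finset.prod_const, ← map_prod C v t,
      ← map_prod C u (s \ t), map_mul]
    ring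
  rw [h1, coeff_C_mul_X_pow]
  by_cases h : j = t.card
  · simp [h]
  · simp [h, Ne.symm h]

private lemma coeff_prod_swap' (n : ℕ) (u v : ℕ → ℂ) (j : ℕ) (hj : j ≤ n) :
    (∏ r ∈ range n, (C (u r) + C (v r) * X)).coeff j
      = (∏ r ∈ range n, (C (v r) + C (u r) * X)).coeff (n - j) := by
  rw [coeff_prod_linear', coeff_prod_linear']
  refine Finset.sum_nbij' (fun t => range n \ t) (fun t => range n \ t) ?_ ?_ ?_ ?_ ?_
  · intro t ht
    simp only [mem_powerset] at *
    exact sdiff_subset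
  · intro t ht
    simp only [mem_powerset] at *
    exact sdiff_subset
  · intro t ht
    simp only [mem_powerset] at ht
    exact Finset.sdiff_sdiff_eq_self ht
  · intro t ht
    simp only [mem_powerset] at ht
    exact Finset.sdiff_sdiff_eq_self ht
  · intro t ht
    simp only [mem_powerset] at ht
    have hcard : (range n \ t).card = n - t.card := by
      rw [Finset.card_sdiff_of_subset ht, Finset.card_range]
    have htn : t.card ≤ n := by
      simpa [Finset.card_range] using Finset.card_le_card ht
    rw [Finset.sdiff_sdiff_eq_self ht, hcard]
    by_cases h : t.card = j
    · rw [if_pos h, if_pos (by omega), mul_comm]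
    · rw [if_neg h, if_neg (by omega)]

/-- Lemma 4 of the paper: the residue at `z = ((d−1)/d) z_d` of
`z ↦ (z_d−z)^α/(z−((d−1)/d)z_d)^{α+1} · e(z,z_d)/(N z)`, computed as `(1/α!)`
times the `α`-th derivative at the pole of the holomorphic factor
`z ↦ (z_d−z)^α · e(z,z_d)/(N z)` — note
`e(z,z_d)/(N z) = ∏_{r=0}^{N−1}(r z + (N−r) z_d)` since the `r = N` factor of
`e` is `N z` — equals `z_d^N · d^α · ∑_{l=0}^{α} A_l^{(d)} (−d)^{−α+l}`. -/
theorem stmt12 (N d α : ℕ) (hN : 2 ≤ N) (hd : 1 ≤ d)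
    (zd : ℂ) (hzd : zd ≠ 0)
    (a : ℕ → ℂ)
    (ha : ∀ i, a i = (∏ r ∈ Finset.range N,
        (Polynomial.C ((N * (d - 1) + (r + 1) : ℕ) : ℂ) + (N : ℂ) • Polynomial.X)).coeff i)
    (A : ℕ → ℂ)
    (hA : ∀ k, A k = ∑ i ∈ Finset.range (k + 1),
        a i * ((N + k - i - 1).choose (k - i) : ℂ) * (-1 : ℂ) ^ (k - i)
          / (d : ℂ) ^ (N + k - i)) :
    (1 / (α.factorial : ℂ)) *
      iteratedDeriv α (fun z : ℂ =>
        (zd - z) ^ α * ∏ r ∈ Finset.range N, ((r : ℂ) * z + ((N - r : ℕ) : ℂ) * zd))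
        ((((d : ℂ) - 1) / (d : ℂ)) * zd)
      = zd ^ N * (d : ℂ) ^ α * ∑ k ∈ Finset.range (α + 1), A k * (-(d : ℂ)) ^ (k : ℤ) / (-(d : ℂ)) ^ (α : ℤ) := by
  -- basic nonvanishing facts
  have hdC : (d : ℂ) ≠ 0 := Nat.cast_ne_zero.mpr (by omega)
  set c : ℂ := (((d : ℂ) - 1) / (d : ℂ)) * zd with hc
  set b : ℂ := zd / (d : ℂ) with hbdef
  have hbne : b ≠ 0 := div_ne_zero hzd hdC
  -- the polynomial under the derivative
  set p : Polynomial ℂ :=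
    (C zd - X) ^ α * ∏ r ∈ Finset.range N, (C (r : ℂ) * X + C (((N - r : ℕ) : ℂ) * zd)) with hp
  have hfun : (fun z : ℂ =>
      (zd - z) ^ α * ∏ r ∈ Finset.range N, ((r : ℂ) * z + ((N - r : ℕ) : ℂ) * zd))
      = fun z => p.eval z := by
    funext z
    simp [hp, eval_prod]
  rw [hfun, poly_iteratedDeriv']
  -- reduce to a Taylor coefficient
  have hres : (1 / (α.factorial : ℂ)) * (Polynomial.derivative^[α] p).eval c
      = (Polynomial.taylor c p).coeff α := by
    rw [Polynomial.taylor_coeff]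
    have h2 : (Polynomial.derivative^[α] p) = α.factorial • (Polynomial.hasseDeriv α p) := by
      rw [← Polynomial.factorial_smul_hasseDeriv]
      rfl
    rw [h2]
    have : ((α.factorial • Polynomial.hasseDeriv α p)).eval c
        = (α.factorial : ℂ) * (Polynomial.hasseDeriv α p).eval c := by
      rw [nsmul_eq_mul]
      simp
    rw [this]
    have hfac : (α.factorial : ℂ) ≠ 0 := Nat.cast_ne_zero.mpr α.factorial_ne_zero
    field_simp
  rw [hres]
  -- compute the Taylor shift
  have htay : Polynomial.taylor c p
      = (C b - X) ^ α * ∏ r ∈ Finset.range N, (C (r : ℂ) * X + C (((N : ℂ) * d - r) * b)) := by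
    rw [Polynomial.taylor_apply, hp, mul_comp, pow_comp, sub_comp, C_comp, X_comp, Polynomial.prod_comp]
    congr 1
    · have : C zd - (X + C c) = C b - X := by
        rw [hbdef, hc]
        rw [sub_add_eq_sub_sub, sub_right_comm, ← C_sub]
        congr 2
        field_simp
        ring
      rw [this]
    · refine Finset.prod_congr rfl fun r hr => ?_
      have hrN : r < N := Finset.mem_range.mp hr
      rw [add_comp, mul_comp, C_comp, C_comp, X_comp]
      have hcast : ((N - r : ℕ) : ℂ) = (N : ℂ) - r := by
        push_cast [Nat.cast_sub hrN.le]
        ring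
      have : C (r : ℂ) * (X + C c) + C (((N - r : ℕ) : ℂ) * zd)
          = C (r : ℂ) * X + C (((N : ℂ) * d - r) * b) := by
        rw [hcast, hc, hbdef]
        rw [mul_add, add_assoc, ← C_mul, ← C_add]
        congr 1
        congr 1
        field_simp
        ring
      rw [this]
  rw [htay]
  set P : Polynomial ℂ :=
    (C b - X) ^ α * ∏ r ∈ Finset.range N, (C (r : ℂ) * X + C (((N : ℂ) * d - r) * b)) with hP
  set Q : Polynomial ℂ :=
    (1 - X) ^ α * ∏ r ∈ Finset.range N, (C ((N : ℂ) * d - r) + C (r : ℂ) * X) with hQ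
  have hPcomp : P.comp (C b * X) = C (b ^ (α + N)) * Q := by
    rw [hP, mul_comp, pow_comp, sub_comp, C_comp, X_comp, Polynomial.prod_comp]
    have h1 : (C b - C b * X) ^ α = C b ^ α * (1 - X) ^ α := by
      rw [← mul_pow]
      congr 1
      ring
    have h2 : ∀ r ∈ Finset.range N, (C (r : ℂ) * X + C (((N : ℂ) * d - r) * b)).comp (C b * X)
        = C b * (C ((N : ℂ) * d - r) + C (r : ℂ) * X) := by
      intro r _
      rw [add_comp, mul_comp, C_comp, C_comp, X_comp, C_mul]
      ring
    rw [h1, Finset.prod_congr rfl h2, Finset.prod_mul_distrib, Finset.prod_const,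
      Finset.card_range, hQ, map_pow C b, pow_add]
    ring
  have hPQ : P.coeff α = b ^ N * Q.coeff α := by
    have h := coeff_comp_C_mul_X' P b α
    rw [hPcomp, coeff_C_mul] at h
    have hbα : (b : ℂ) ^ α ≠ 0 := pow_ne_zero _ hbne
    apply mul_right_cancel₀ hbα
    rw [← h, pow_add]
    ring
  rw [hPQ]
  set hpol : Polynomial ℂ := ∏ r ∈ Finset.range N, (C ((N : ℂ) * d) - C (r : ℂ) * X) with hhpol
  have hQcomp : Q = (X ^ α * hpol).comp (1 - X) := by
    rw [hQ, hhpol, mul_comp, pow_comp, X_comp, Polynomial.prod_comp]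
    congr 1
    refine Finset.prod_congr rfl fun r _ => ?_
    rw [sub_comp, C_comp, mul_comp, C_comp, X_comp, map_sub]
    ring
  have hdeg_h : hpol.natDegree ≤ N := by
    refine le_trans (Polynomial.natDegree_prod_le _ _) ?_
    refine le_trans (Finset.sum_le_card_nsmul _ _ 1 fun r _ => ?_) (by simp)
    refine le_trans (Polynomial.natDegree_sub_le _ _) ?_
    simp only [Polynomial.natDegree_C, max_le_iff]
    refine ⟨by omega, le_trans (Polynomial.natDegree_C_mul_le _ _) (le_of_eq Polynomial.natDegree_X)⟩
  have hdeg : (X ^ α * hpol).natDegree < α + N + 1 := by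
    refine Nat.lt_succ_of_le (le_trans (Polynomial.natDegree_mul_le) ?_)
    rw [Polynomial.natDegree_X_pow]
    omega
  have hQcoeff : Q.coeff α
      = ∑ j ∈ Finset.range (N + 1), hpol.coeff j * ((-1 : ℂ) ^ α * ((α + j).choose α)) := by
    rw [hQcomp, coeff_comp_one_sub' _ (α + N + 1) α hdeg]
    have h1 : ∀ m ∈ Finset.range (α + N + 1),
        (X ^ α * hpol).coeff m * ((-1 : ℂ) ^ α * (m.choose α))
        = if α ≤ m then hpol.coeff (m - α) * ((-1 : ℂ) ^ α * (m.choose α)) else 0 := by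
      intro m _
      rw [Polynomial.coeff_X_pow_mul']
      split_ifs <;> simp
    rw [Finset.sum_congr rfl h1, Finset.sum_ite, Finset.sum_const_zero, add_zero]
    have h2 : Finset.filter (fun m => α ≤ m) (Finset.range (α + N + 1))
        = Finset.Ico α (α + N + 1) := by
      ext m
      simp only [Finset.mem_filter, Finset.mem_range, Finset.mem_Ico]
      omega
    rw [h2, Finset.sum_Ico_eq_sum_range, show α + N + 1 - α = N + 1 by omega]
    refine Finset.sum_congr rfl fun j _ => ?_
    rw [show α + j - α = j by omega]
  rw [hQcoeff]
  -- reflected product representation of `a`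
  have ha' : ∀ i, a i
      = (∏ r ∈ Finset.range N, (C ((N : ℂ) * d - r) + C (N : ℂ) * X)).coeff i := by
    intro i
    rw [ha i]
    congr 1
    rw [← Finset.prod_range_reflect]
    refine Finset.prod_congr rfl fun r hr => ?_
    have hrN : r < N := Finset.mem_range.mp hr
    have hcast : ((N * (d - 1) + (N - 1 - r + 1) : ℕ) : ℂ) = (N : ℂ) * d - r := by
      have h1 : (N * (d - 1) + (N - 1 - r + 1) : ℕ) = N * d - r := by
        obtain ⟨e, rfl⟩ : ∃ e, d = e + 1 := ⟨d - 1, by omega⟩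
        rw [Nat.add_sub_cancel]
        have h2 : N * (e + 1) = N * e + N := by ring
        rw [h2]
        generalize N * e = M
        omega
      rw [h1]
      have hrNd : r ≤ N * d := by
        have : N ≤ N * d := Nat.le_mul_of_pos_right N (by omega)
        omega
      rw [Nat.cast_sub hrNd]
      push_cast
      ring
    rw [hcast, Polynomial.smul_eq_C_mul]
  set G : Polynomial ℂ :=
    ∏ r ∈ Finset.range N, (C ((N : ℂ) * d - r) - C ((N : ℂ) * d) * X) with hG
  have hGa : ∀ i, G.coeff i = a i * (-(d : ℂ)) ^ i := by
    intro i
    have h := coeff_comp_C_mul_X'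
      (∏ r ∈ Finset.range N, (C ((N : ℂ) * d - r) + C (N : ℂ) * X)) (-(d : ℂ)) i
    rw [Polynomial.prod_comp] at h
    have h2 : ∀ r ∈ Finset.range N,
        ((C ((N : ℂ) * d - r) + C (N : ℂ) * X)).comp (C (-(d : ℂ)) * X)
        = C ((N : ℂ) * d - r) - C ((N : ℂ) * d) * X := by
      intro r _
      rw [add_comp, C_comp, mul_comp, C_comp, X_comp, map_neg, map_mul]
      ring
    rw [Finset.prod_congr rfl h2] at h
    rw [hG, h, ← ha' i]
  set hhat : Polynomial ℂ :=
    ∏ r ∈ Finset.range N, (C (-(r : ℂ)) + C ((N : ℂ) * d) * X) with hhhat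
  have hGcomp : G = hhat.comp (1 - X) := by
    rw [hG, hhhat, Polynomial.prod_comp]
    refine Finset.prod_congr rfl fun r _ => ?_
    rw [add_comp, C_comp, mul_comp, C_comp, X_comp, map_neg, map_sub]
    ring
  have hdeg_hhat : hhat.natDegree < N + 1 := by
    refine Nat.lt_succ_of_le ?_
    refine le_trans (Polynomial.natDegree_prod_le _ _) ?_
    refine le_trans (Finset.sum_le_card_nsmul _ _ 1 fun r _ => ?_) (by simp)
    refine le_trans (Polynomial.natDegree_add_le _ _) ?_
    simp only [Polynomial.natDegree_C, max_le_iff]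
    exact ⟨by omega, le_trans (Polynomial.natDegree_C_mul_le _ _) (le_of_eq Polynomial.natDegree_X)⟩
  have hGcoeff : ∀ i, G.coeff i
      = ∑ k ∈ Finset.range (N + 1), hhat.coeff k * ((-1 : ℂ) ^ i * (k.choose i)) := fun i => by
    rw [hGcomp, coeff_comp_one_sub' _ (N + 1) i hdeg_hhat]
  have hrev : ∀ j ≤ N, hhat.coeff (N - j) = hpol.coeff j := by
    intro j hj
    have hswap := coeff_prod_swap' N (fun r => (N : ℂ) * d) (fun r => -(r : ℂ)) j hj
    have e1 : (∏ r ∈ Finset.range N, (C ((N : ℂ) * d) + C (-(r : ℂ)) * X)) = hpol := by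
      rw [hhpol]
      refine Finset.prod_congr rfl fun r _ => ?_
      rw [map_neg]
      ring
    rw [e1] at hswap
    exact hswap.symm
  -- the central summation identity
  have hdN : ((d : ℂ)) ^ N * (∑ k ∈ Finset.range (α + 1), A k * (-(d : ℂ)) ^ k)
      = ∑ j ∈ Finset.range (N + 1), hpol.coeff j * (((α + j).choose α : ℂ)) := by
    have hterm : ∀ k ∈ Finset.range (α + 1), (d : ℂ) ^ N * (A k * (-(d : ℂ)) ^ k)
        = ∑ i ∈ Finset.range (k + 1), G.coeff i * (((N + k - i - 1).choose (k - i) : ℂ)) := by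
      intro k _
      rw [hA k, Finset.sum_mul, Finset.mul_sum]
      refine Finset.sum_congr rfl fun i hi => ?_
      have hik : i ≤ k := Nat.lt_succ_iff.mp (Finset.mem_range.mp hi)
      obtain ⟨m, rfl⟩ : ∃ m, k = i + m := ⟨k - i, by omega⟩
      rw [hGa i]
      rw [show N + (i + m) - i - 1 = N + m - 1 by omega, show (i + m) - i = m by omega,
        show N + (i + m) - i = N + m by omega]
      have halg : ∀ x : ℂ,
          (d : ℂ) ^ N * (x * (-1 : ℂ) ^ m / (d : ℂ) ^ (N + m) * ((-(d : ℂ)) ^ (i + m)))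
            = x * (-(d : ℂ)) ^ i := by
        intro x
        rw [pow_add (-(d : ℂ)) i m, neg_pow (d : ℂ) m, pow_add (d : ℂ) N m]
        have hpow : ((-1 : ℂ)) ^ m * ((-1 : ℂ)) ^ m = 1 := by
          rw [← mul_pow]
          norm_num
        field_simp
        linear_combination x * (-(d : ℂ)) ^ i * hpow
      linear_combination halg (a i * (((N + m - 1).choose m : ℕ) : ℂ))
    rw [Finset.mul_sum, Finset.sum_congr rfl hterm, sum_triangle' α
      (fun i k => G.coeff i * (((N + k - i - 1).choose (k - i) : ℂ)))]
    have hinner : ∀ i ∈ Finset.range (α + 1),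
        ∑ m ∈ Finset.range (α + 1 - i), G.coeff i * (((N + (i + m) - i - 1).choose ((i + m) - i) : ℂ))
        = G.coeff i * (((N + (α - i)).choose (α - i) : ℂ)) := by
      intro i hi
      have hiα : i ≤ α := Nat.lt_succ_iff.mp (Finset.mem_range.mp hi)
      rw [← Finset.mul_sum]
      congr 1
      have hsimp : ∀ m, ((N + (i + m) - i - 1).choose ((i + m) - i)) = ((N - 1 + m).choose m) := by
        intro m
        congr 1 <;> omega
      rw [Finset.sum_congr rfl fun m _ => by rw [hsimp m]]
      rw [show α + 1 - i = (α - i) + 1 by omega]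
      rw [← Nat.cast_sum]
      rw [hockey' N (α - i) (by omega)]
    rw [Finset.sum_congr rfl hinner]
    -- substitute the expansion of G and swap sums
    have hGsub : ∀ i ∈ Finset.range (α + 1),
        G.coeff i * (((N + (α - i)).choose (α - i) : ℂ))
        = ∑ k ∈ Finset.range (N + 1),
            hhat.coeff k * ((-1 : ℂ) ^ i * (k.choose i) * (((N + α - i).choose (α - i) : ℂ))) := by
      intro i hi
      have hiα : i ≤ α := Nat.lt_succ_iff.mp (Finset.mem_range.mp hi)
      rw [hGcoeff i, Finset.sum_mul, show N + (α - i) = N + α - i by omega]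
      refine Finset.sum_congr rfl fun k _ => ?_
      ring
    rw [Finset.sum_congr rfl hGsub, Finset.sum_comm]
    have hkey : ∀ k ∈ Finset.range (N + 1),
        ∑ i ∈ Finset.range (α + 1),
            hhat.coeff k * ((-1 : ℂ) ^ i * (k.choose i) * (((N + α - i).choose (α - i) : ℂ)))
        = hhat.coeff k * (((N - k + α).choose α : ℂ)) := by
      intro k hk
      have hkN : k ≤ N := Nat.lt_succ_iff.mp (Finset.mem_range.mp hk)
      rw [← Finset.mul_sum]
      congr 1
      rw [← key_binom' k N α hkN]
    rw [Finset.sum_congr rfl hkey]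
    rw [← Finset.sum_range_reflect]
    refine Finset.sum_congr rfl fun j hj => ?_
    have hjN : j ≤ N := Nat.lt_succ_iff.mp (Finset.mem_range.mp hj)
    rw [show N + 1 - 1 - j = N - j by omega, hrev j hjN, show N - (N - j) + α = α + j by omega]
  -- final assembly
  have hSdef : ∑ k ∈ Finset.range (α + 1), A k * (-(d : ℂ)) ^ (k : ℤ) / (-(d : ℂ)) ^ (α : ℤ)
      = (∑ k ∈ Finset.range (α + 1), A k * (-(d : ℂ)) ^ k) / (-(d : ℂ)) ^ α := by
    rw [← Finset.sum_div]
    refine congrArg (· / _) ?_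
    refine Finset.sum_congr rfl fun k _ => ?_
    rw [zpow_natCast]
  have hpull : ∑ j ∈ Finset.range (N + 1), hpol.coeff j * ((-1 : ℂ) ^ α * ((α + j).choose α))
      = (-1 : ℂ) ^ α * ∑ j ∈ Finset.range (N + 1), hpol.coeff j * (((α + j).choose α : ℂ)) := by
    rw [Finset.mul_sum]
    exact Finset.sum_congr rfl fun j _ => by ring
  rw [hpull, ← hdN, hSdef]
  have hzpow : ((-(d : ℂ)) ^ (α : ℤ)) = (-(d : ℂ)) ^ α := zpow_natCast _ _
  have hnd : (-(d : ℂ)) ^ α = (-1 : ℂ) ^ α * (d : ℂ) ^ α := by rw [neg_pow]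
  have hm1 : ((-1 : ℂ)) ^ α * ((-1 : ℂ)) ^ α = 1 := by
    rw [← pow_add]
    exact Even.neg_one_pow ⟨α, by ring⟩
  have hbN : b ^ N * (d : ℂ) ^ N = zd ^ N := by
    rw [hbdef, div_pow]
    field_simp
  rw [hnd]
  have hd_pow : ((d : ℂ)) ^ α ≠ 0 := pow_ne_zero _ hdC
  have hd_powN : ((d : ℂ)) ^ N ≠ 0 := pow_ne_zero _ hdC
  have hm1ne : ((-1 : ℂ)) ^ α ≠ 0 := pow_ne_zero _ (by norm_num)
  field_simp
  linear_combination (zd ^ N * (∑ k ∈ Finset.range (α + 1), A k * (-(d : ℂ)) ^ k)) * hm1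
    + ((-1:ℂ)^α * ((-1:ℂ))^α * (∑ k ∈ Finset.range (α + 1), A k * (-(d : ℂ)) ^ k)) * hbN
end
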